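/- Let 0 < d < D be integers and r, w > 0 satisfy r²/(d+2) ≥ w²/(D−d+2). Identify ℝ^D = ℝ^d × ℝ^{D−d} and let C = {(y₁,y₂) : ‖y₁‖ ≤ r, ‖y₂‖ ≤ w}. Then the infimum over all d-dimensional affine subspaces L of ℝ^D of ∫_C dist(y,L)² dy equals ((D−d)/(D−d+2)) · w² · vol(C); in particular the axis L₁ = ℝ^d × {0} is a best-fit d-flat to C in the least-squares sense. -/

import Mathlib

open MeasureTheory Metric

/-- The solid cylinder in `ℝ^D` (identified coordinatewise with `ℝ^d × ℝ^{D-d}`) of axis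
radius `r` (in the first `d` coordinates) and cross-sectional radius `w` (in the remaining
`D - d` coordinates). -/
def cylinder (d D : ℕ) (r w : ℝ) : Set (EuclideanSpace ℝ (Fin D)) :=
  {y | (∑ i ∈ Finset.univ.filter (fun i : Fin D => (i : ℕ) < d), (y i) ^ 2) ≤ r ^ 2 ∧
       (∑ i ∈ Finset.univ.filter (fun i : Fin D => d ≤ (i : ℕ)), (y i) ^ 2) ≤ w ^ 2}

noncomputable section BestFitAux
open Module


set_option linter.unusedSectionVars false

namespace BestFit


variable {ι : Type*} [Fintype ι] [DecidableEq ι]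

/-- Sign flip of coordinate `i` as a linear isometry of Euclidean space. -/
def flip (i : ι) : EuclideanSpace ℝ ι ≃ₗᵢ[ℝ] EuclideanSpace ℝ ι :=
  LinearIsometryEquiv.piLpCongrRight 2
    (fun j => if j = i then LinearIsometryEquiv.neg ℝ else LinearIsometryEquiv.refl ℝ ℝ)

lemma flip_apply (i j : ι) (x : EuclideanSpace ℝ ι) :
    flip i x j = if j = i then -(x j) else x j := by
  simp only [flip, LinearIsometryEquiv.piLpCongrRight_apply]
  by_cases h : j = i
  · subst h; simp [PiLp.toLp_apply]
  · simp [h, PiLp.toLp_apply]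

lemma setIntegral_comp_isometry (f : EuclideanSpace ℝ ι ≃ₗᵢ[ℝ] EuclideanSpace ℝ ι)
    (g : EuclideanSpace ℝ ι → ℝ) (s : Set (EuclideanSpace ℝ ι)) :
    ∫ x in f ⁻¹' s, g (f x) = ∫ y in s, g y :=
  (f.measurePreserving).setIntegral_preimage_emb f.toMeasurableEquiv.measurableEmbedding g s

lemma isometry_preimage_closedBall (f : EuclideanSpace ℝ ι ≃ₗᵢ[ℝ] EuclideanSpace ℝ ι) (R : ℝ) :
    f ⁻¹' closedBall (0 : EuclideanSpace ℝ ι) R = closedBall 0 R := by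
  ext x
  simp [mem_closedBall_zero_iff]

lemma setIntegral_eq_zero_of_odd (f : EuclideanSpace ℝ ι ≃ₗᵢ[ℝ] EuclideanSpace ℝ ι)
    {g : EuclideanSpace ℝ ι → ℝ} {s : Set (EuclideanSpace ℝ ι)}
    (hs : f ⁻¹' s = s) (hg : ∀ x, g (f x) = - g x) :
    ∫ x in s, g x = 0 := by
  have h := setIntegral_comp_isometry f g s
  rw [hs] at h
  simp only [hg, integral_neg] at h
  linarith


lemma continuous_coord (i : ι) : Continuous (fun x : EuclideanSpace ℝ ι => x i) :=
  (EuclideanSpace.proj (𝕜 := ℝ) i).continuous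

lemma integrableOn_closedBall_of_continuous {g : EuclideanSpace ℝ ι → ℝ} (hg : Continuous g)
    (R : ℝ) : IntegrableOn g (closedBall (0 : EuclideanSpace ℝ ι) R) :=
  hg.continuousOn.integrableOn_compact (isCompact_closedBall _ _)

lemma ball_moment_one (R : ℝ) (i : ι) :
    ∫ x in closedBall (0 : EuclideanSpace ℝ ι) R, x i = 0 := by
  refine setIntegral_eq_zero_of_odd (flip i) (isometry_preimage_closedBall _ R) (fun x => ?_)
  simp [flip_apply]

lemma ball_moment_cross (R : ℝ) {i j : ι} (hij : i ≠ j) :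
    ∫ x in closedBall (0 : EuclideanSpace ℝ ι) R, x i * x j = 0 := by
  refine setIntegral_eq_zero_of_odd (flip i) (isometry_preimage_closedBall _ R) (fun x => ?_)
  show flip i x i * flip i x j = -(x i * x j)
  rw [flip_apply, flip_apply, if_pos rfl, if_neg hij.symm]
  ring

lemma ball_moment_sq_swap (R : ℝ) (i j : ι) :
    ∫ x in closedBall (0 : EuclideanSpace ℝ ι) R, (x i)^2
      = ∫ x in closedBall (0 : EuclideanSpace ℝ ι) R, (x j)^2 := by
  have h := setIntegral_comp_isometry (LinearIsometryEquiv.piLpCongrLeft 2 ℝ ℝ (Equiv.swap i j))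
    (fun y => (y i)^2) (closedBall 0 R)
  rw [isometry_preimage_closedBall] at h
  rw [← h]
  refine setIntegral_congr_fun measurableSet_closedBall (fun x _ => ?_)
  simp only [LinearIsometryEquiv.piLpCongrLeft_apply, Equiv.piCongrLeft', Equiv.coe_fn_mk,
    Equiv.symm_symm]
  rw [Equiv.symm_swap, Equiv.swap_apply_left]

lemma nontrivial_euclidean (i : ι) : Nontrivial (EuclideanSpace ℝ ι) := by
  refine ⟨EuclideanSpace.single i 1, 0, fun h => ?_⟩
  have := congrArg (· i) h
  simp [EuclideanSpace.single_apply] at this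

lemma ball_integral_normsq [Nonempty ι] {R : ℝ} (hR : 0 < R) :
    ∫ x in closedBall (0 : EuclideanSpace ℝ ι) R, ‖x‖^2
      = (Fintype.card ι : ℝ) * (volume (ball (0 : EuclideanSpace ℝ ι) 1)).toReal
          * (R^(Fintype.card ι + 2) / ((Fintype.card ι : ℝ) + 2)) := by
  haveI : Nontrivial (EuclideanSpace ℝ ι) := nontrivial_euclidean (Classical.arbitrary ι)
  set n := Fintype.card ι with hn
  have hn1 : 1 ≤ n := Fintype.card_pos
  have hfr : finrank ℝ (EuclideanSpace ℝ ι) = n := finrank_euclideanSpace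
  have h1 : ∫ x in closedBall (0 : EuclideanSpace ℝ ι) R, ‖x‖^2
      = ∫ x : EuclideanSpace ℝ ι, (fun t : ℝ => if t ≤ R then t^2 else 0) ‖x‖ := by
    rw [← integral_indicator measurableSet_closedBall]
    congr 1
    funext x
    by_cases hx : ‖x‖ ≤ R <;> simp [Set.indicator_apply, mem_closedBall_zero_iff, hx]
  have h2 : (∫ y in Set.Ioi (0:ℝ), y ^ (n-1) • (fun t : ℝ => if t ≤ R then t^2 else 0) y)
      = R^(n+2)/((n:ℝ)+2) := by
    have e1 : ∀ y ∈ Set.Ioi (0:ℝ), y ^ (n-1) • (fun t : ℝ => if t ≤ R then t^2 else 0) y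
        = Set.indicator (Set.Ioc 0 R) (fun t => t^(n+1)) y := by
      intro y hy
      have hy0 : (0:ℝ) < y := hy
      simp only [smul_eq_mul, Set.indicator_apply, Set.mem_Ioc]
      by_cases h : y ≤ R
      · simp only [h, if_true, hy0, and_true, true_and]
        rw [← pow_add]
        congr 1
        omega
      · simp [h]
    rw [setIntegral_congr_fun measurableSet_Ioi e1, setIntegral_indicator measurableSet_Ioc,
        Set.inter_eq_self_of_subset_right Set.Ioc_subset_Ioi_self,
        ← intervalIntegral.integral_of_le hR.le, integral_pow]
    rw [zero_pow (by omega)]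
    push_cast
    ring
  rw [h1, integral_fun_norm_addHaar volume (fun t : ℝ => if t ≤ R then t^2 else 0), hfr, h2,
      nsmul_eq_mul, smul_eq_mul]
  simp only [measureReal_def]
  ring

lemma ball_moment_sq [Nonempty ι] (i : ι) {R : ℝ} (hR : 0 < R) :
    ∫ x in closedBall (0 : EuclideanSpace ℝ ι) R, (x i)^2
      = R^2/((Fintype.card ι : ℝ)+2) * (volume (closedBall (0 : EuclideanSpace ℝ ι) R)).toReal := by
  haveI : Nontrivial (EuclideanSpace ℝ ι) := nontrivial_euclidean (Classical.arbitrary ι)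
  set n := Fintype.card ι with hn
  have hn1 : 1 ≤ n := Fintype.card_pos
  have hfr : finrank ℝ (EuclideanSpace ℝ ι) = n := finrank_euclideanSpace
  have hcard : (n:ℝ) ≠ 0 := by positivity
  set v₁ := (volume (ball (0 : EuclideanSpace ℝ ι) 1)).toReal with hv₁
  have hsum : (n:ℝ) * (∫ x in closedBall (0 : EuclideanSpace ℝ ι) R, (x i)^2)
      = ∫ x in closedBall (0 : EuclideanSpace ℝ ι) R, ‖x‖^2 := by
    calc (n:ℝ) * (∫ x in closedBall (0 : EuclideanSpace ℝ ι) R, (x i)^2)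
        = ∑ j : ι, ∫ x in closedBall (0 : EuclideanSpace ℝ ι) R, (x j)^2 := by
          rw [Finset.sum_congr rfl (fun j _ => ball_moment_sq_swap R j i), Finset.sum_const,
            Finset.card_univ, nsmul_eq_mul]
      _ = ∫ x in closedBall (0 : EuclideanSpace ℝ ι) R, ∑ j : ι, (x j)^2 :=
          (integral_finset_sum Finset.univ (fun j _ =>
            (integrableOn_closedBall_of_continuous ((continuous_coord j).pow 2) R))).symm
      _ = ∫ x in closedBall (0 : EuclideanSpace ℝ ι) R, ‖x‖^2 := by
          refine setIntegral_congr_fun measurableSet_closedBall (fun x _ => ?_)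
          rw [EuclideanSpace.norm_eq, Real.sq_sqrt (by positivity)]
          exact Finset.sum_congr rfl (fun j _ => by rw [Real.norm_eq_abs, sq_abs])
  have hv : (volume (closedBall (0 : EuclideanSpace ℝ ι) R)).toReal = R^n * v₁ := by
    rw [Measure.addHaar_closedBall_eq_addHaar_ball, Measure.addHaar_ball _ _ hR.le, hfr,
      ENNReal.toReal_mul, ENNReal.toReal_ofReal (by positivity)]
  have key : (n:ℝ) * (∫ x in closedBall (0 : EuclideanSpace ℝ ι) R, (x i)^2)
      = (n:ℝ) * (R^2/((n:ℝ)+2) * (R^n * v₁)) := by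
    rw [hsum, ball_integral_normsq hR, pow_add]
    ring
  rw [hv]
  exact mul_left_cancel₀ hcard key



/-! ### Product decomposition of the cylinder -/

def EuclideanSpace.measurableEquiv (κ : Type*) [Fintype κ] : EuclideanSpace ℝ κ ≃ᵐ (κ → ℝ) :=
  (MeasurableEquiv.toLp 2 (κ → ℝ)).symm

lemma EuclideanSpace.volume_preserving_measurableEquiv (κ : Type*) [Fintype κ] :
    MeasurePreserving (EuclideanSpace.measurableEquiv κ) :=
  _root_.EuclideanSpace.volume_preserving_symm_measurableEquiv_toLp κ

def Fm (d D : ℕ) : EuclideanSpace ℝ (Fin D) ≃ᵐ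
    (({i : Fin D // (i:ℕ) < d} → ℝ) × ({i : Fin D // ¬ (i:ℕ) < d} → ℝ)) :=
  (EuclideanSpace.measurableEquiv (Fin D)).trans
    (MeasurableEquiv.piEquivPiSubtypeProd (fun _ : Fin D => ℝ) (fun i => (i:ℕ) < d))

lemma Fm_apply (d D : ℕ) (y : EuclideanSpace ℝ (Fin D)) :
    Fm d D y = (fun i => y i.1, fun i => y i.1) := rfl

lemma Fm_mp (d D : ℕ) : MeasurePreserving (Fm d D) volume volume :=
  (volume_preserving_piEquivPiSubtypeProd (fun _ : Fin D => ℝ) (fun i => (i:ℕ) < d)).comp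
    (EuclideanSpace.volume_preserving_measurableEquiv (Fin D))

def ballSet (κ : Type*) [Fintype κ] (R : ℝ) : Set (κ → ℝ) := {x | ∑ i, (x i)^2 ≤ R^2}

lemma measurableSet_ballSet {κ : Type*} [Fintype κ] (R : ℝ) : MeasurableSet (ballSet κ R) := by
  have : IsClosed (ballSet κ R) :=
    isClosed_le (by continuity) continuous_const
  exact this.measurableSet

lemma meq_preimage_ballSet {κ : Type*} [Fintype κ] {R : ℝ} (hR : 0 ≤ R) :
    (EuclideanSpace.measurableEquiv κ) ⁻¹' ballSet κ R
      = closedBall (0 : EuclideanSpace ℝ κ) R := by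
  ext x
  have hx : ∀ i, (EuclideanSpace.measurableEquiv κ) x i = x i := fun _ => rfl
  simp only [Set.mem_preimage, ballSet, Set.mem_setOf_eq, mem_closedBall_zero_iff,
    EuclideanSpace.norm_eq, hx]
  have hnorm : ∑ i, ‖x i‖^2 = ∑ i, (x i)^2 :=
    Finset.sum_congr rfl (fun j _ => by rw [Real.norm_eq_abs, sq_abs])
  rw [hnorm]
  constructor
  · intro h
    calc Real.sqrt (∑ i, (x i)^2) ≤ Real.sqrt (R^2) := Real.sqrt_le_sqrt h
      _ = R := Real.sqrt_sq hR
  · intro h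
    calc ∑ i, (x i)^2 = (Real.sqrt (∑ i, (x i)^2))^2 := (Real.sq_sqrt (by positivity)).symm
      _ ≤ R^2 := by exact pow_le_pow_left₀ (Real.sqrt_nonneg _) h 2

lemma volume_ballSet {κ : Type*} [Fintype κ] {R : ℝ} (hR : 0 ≤ R) :
    volume (ballSet κ R) = volume (closedBall (0 : EuclideanSpace ℝ κ) R) := by
  rw [← meq_preimage_ballSet hR,
    (EuclideanSpace.volume_preserving_measurableEquiv κ).measure_preimage
      (measurableSet_ballSet R).nullMeasurableSet]

lemma setIntegral_meq {κ : Type*} [Fintype κ] (g : (κ → ℝ) → ℝ) (s : Set (κ → ℝ)) :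
    ∫ x in (EuclideanSpace.measurableEquiv κ) ⁻¹' s,
        g ((EuclideanSpace.measurableEquiv κ) x) = ∫ x in s, g x :=
  (EuclideanSpace.volume_preserving_measurableEquiv κ).setIntegral_preimage_emb
    (EuclideanSpace.measurableEquiv κ).measurableEmbedding g s

lemma filter_not_lt (d D : ℕ) :
    (Finset.univ.filter (fun i : Fin D => d ≤ (i : ℕ)))
      = Finset.univ.filter (fun i : Fin D => ¬ (i:ℕ) < d) := by
  apply Finset.filter_congr
  intro i _
  simp [not_lt]

lemma Fm_preimage (d D : ℕ) (r w : ℝ) :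
    Fm d D ⁻¹' ((ballSet {i : Fin D // (i:ℕ) < d} r) ×ˢ (ballSet {i : Fin D // ¬ (i:ℕ) < d} w))
      = cylinder d D r w := by
  ext y
  have h1 : ∑ i : {i : Fin D // (i:ℕ) < d}, (y i.1)^2
      = ∑ i ∈ Finset.univ.filter (fun i : Fin D => (i : ℕ) < d), (y i)^2 :=
    (Finset.sum_subtype (p := fun i : Fin D => (i:ℕ) < d)
      (Finset.univ.filter (fun i : Fin D => (i : ℕ) < d))
      (fun i => by simp) (fun i => (y i)^2)).symm
  have h2 : ∑ i : {i : Fin D // ¬ (i:ℕ) < d}, (y i.1)^2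
      = ∑ i ∈ Finset.univ.filter (fun i : Fin D => d ≤ (i : ℕ)), (y i)^2 := by
    rw [filter_not_lt]
    exact (Finset.sum_subtype (p := fun i : Fin D => ¬ (i:ℕ) < d)
      (Finset.univ.filter (fun i : Fin D => ¬ (i:ℕ) < d))
      (fun i => by simp) (fun i => (y i)^2)).symm
  simp only [Set.mem_preimage, Fm_apply, Set.mem_prod, ballSet, Set.mem_setOf_eq, h1, h2]
  exact Iff.rfl

lemma cyl_integral_prod (d D : ℕ) (r w : ℝ)
    (g₁ : ({i : Fin D // (i:ℕ) < d} → ℝ) → ℝ) (g₂ : ({i : Fin D // ¬ (i:ℕ) < d} → ℝ) → ℝ) :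
    ∫ y in cylinder d D r w, g₁ (fun i => y i.1) * g₂ (fun i => y i.1)
      = (∫ x in ballSet {i : Fin D // (i:ℕ) < d} r, g₁ x)
        * ∫ x in ballSet {i : Fin D // ¬ (i:ℕ) < d} w, g₂ x := by
  have h := (Fm_mp d D).setIntegral_preimage_emb (Fm d D).measurableEmbedding
    (fun z => g₁ z.1 * g₂ z.2)
    ((ballSet {i : Fin D // (i:ℕ) < d} r) ×ˢ (ballSet {i : Fin D // ¬ (i:ℕ) < d} w))
  rw [Fm_preimage] at h
  rw [show (∫ y in cylinder d D r w, g₁ (fun i => y i.1) * g₂ (fun i => y i.1))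
      = ∫ y in cylinder d D r w, (fun z => g₁ z.1 * g₂ z.2) (Fm d D y) from rfl, h,
    Measure.volume_eq_prod _ _, setIntegral_prod_mul]

lemma cyl_volume_eq (d D : ℕ) (r w : ℝ) :
    volume (cylinder d D r w)
      = volume (ballSet {i : Fin D // (i:ℕ) < d} r)
        * volume (ballSet {i : Fin D // ¬ (i:ℕ) < d} w) := by
  rw [← Fm_preimage d D r w,
    (Fm_mp d D).measure_preimage
      (((measurableSet_ballSet r).prod (measurableSet_ballSet w)).nullMeasurableSet),
    Measure.volume_eq_prod _ _, Measure.prod_prod]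


/-! ### Cardinalities and nonemptiness -/

lemma card_lt (d D : ℕ) (hdD : d ≤ D) : Fintype.card {i : Fin D // (i:ℕ) < d} = d := by
  have e : {i : Fin D // (i:ℕ) < d} ≃ Fin d :=
    { toFun := fun x => ⟨(x.1 : ℕ), x.2⟩
      invFun := fun j => ⟨⟨(j : ℕ), lt_of_lt_of_le j.2 hdD⟩, j.2⟩
      left_inv := fun x => Subtype.ext (Fin.ext rfl)
      right_inv := fun j => Fin.ext rfl }
  rw [Fintype.card_congr e, Fintype.card_fin]

lemma card_not_lt (d D : ℕ) (hdD : d ≤ D) :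
    Fintype.card {i : Fin D // ¬ (i:ℕ) < d} = D - d := by
  rw [Fintype.card_subtype_compl, card_lt d D hdD, Fintype.card_fin]

/-! ### Compactness of the cylinder -/

lemma cylinder_isCompact (d D : ℕ) (r w : ℝ) : IsCompact (cylinder d D r w) := by
  have hcont1 : Continuous (fun y : EuclideanSpace ℝ (Fin D) =>
      ∑ i ∈ Finset.univ.filter (fun i : Fin D => (i : ℕ) < d), (y i) ^ 2) := by
    apply continuous_finset_sum
    exact fun i _ => (continuous_coord i).pow 2
  have hcont2 : Continuous (fun y : EuclideanSpace ℝ (Fin D) =>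
      ∑ i ∈ Finset.univ.filter (fun i : Fin D => d ≤ (i : ℕ)), (y i) ^ 2) := by
    apply continuous_finset_sum
    exact fun i _ => (continuous_coord i).pow 2
  have hclosed : IsClosed (cylinder d D r w) :=
    ((isClosed_le hcont1 continuous_const).inter (isClosed_le hcont2 continuous_const))
  refine (isCompact_closedBall (0 : EuclideanSpace ℝ (Fin D))
    (Real.sqrt (r^2 + w^2))).of_isClosed_subset hclosed ?_
  intro y hy
  rw [mem_closedBall_zero_iff, EuclideanSpace.norm_eq]
  apply Real.sqrt_le_sqrt
  have hsplit : ∑ i : Fin D, ‖y i‖^2 = (∑ i ∈ Finset.univ.filter (fun i : Fin D => (i:ℕ) < d),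
      (y i)^2) + ∑ i ∈ Finset.univ.filter (fun i : Fin D => ¬ (i:ℕ) < d), (y i)^2 := by
    rw [← Finset.sum_filter_add_sum_filter_not Finset.univ (fun i : Fin D => (i:ℕ) < d)
      (fun i => ‖y i‖^2)]
    congr 1 <;> exact Finset.sum_congr rfl (fun i _ => by rw [Real.norm_eq_abs, sq_abs])
  rw [hsplit, ← filter_not_lt]
  exact add_le_add hy.1 hy.2

lemma cylinder_measurableSet (d D : ℕ) (r w : ℝ) : MeasurableSet (cylinder d D r w) :=
  (cylinder_isCompact d D r w).isClosed.measurableSet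

lemma cylinder_integrableOn (d D : ℕ) (r w : ℝ) {g : EuclideanSpace ℝ (Fin D) → ℝ}
    (hg : Continuous g) : IntegrableOn g (cylinder d D r w) :=
  hg.continuousOn.integrableOn_compact (cylinder_isCompact d D r w)

/-! ### Moments of the cylinder -/

lemma cyl_moment_sq (d D : ℕ) (hd : 0 < d) (hdD : d < D) {r w : ℝ} (hr : 0 < r) (hw : 0 < w)
    (i : Fin D) :
    ∫ y in cylinder d D r w, (y i)^2
      = (if (i:ℕ) < d then r^2/((d:ℝ)+2) else w^2/(((D-d : ℕ):ℝ)+2))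
          * (volume (cylinder d D r w)).toReal := by
  haveI h1 : Nonempty {i : Fin D // (i:ℕ) < d} := ⟨⟨⟨0, hd.trans hdD⟩, hd⟩⟩
  haveI h2 : Nonempty {i : Fin D // ¬ (i:ℕ) < d} := ⟨⟨⟨d, hdD⟩, by simp⟩⟩
  have hballA : ∀ j : {i : Fin D // (i:ℕ) < d},
      ∫ x in ballSet {i : Fin D // (i:ℕ) < d} r, (x j)^2
        = r^2/((d:ℝ)+2) * (volume (ballSet {i : Fin D // (i:ℕ) < d} r)).toReal := by
    intro j
    have := setIntegral_meq (κ := {i : Fin D // (i:ℕ) < d}) (fun x => (x j)^2) (ballSet _ r)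
    rw [meq_preimage_ballSet hr.le] at this
    rw [← this]
    rw [show (∫ x in closedBall (0 : EuclideanSpace ℝ {i : Fin D // (i:ℕ) < d}) r,
        ((EuclideanSpace.measurableEquiv _) x j)^2)
      = ∫ x in closedBall (0 : EuclideanSpace ℝ {i : Fin D // (i:ℕ) < d}) r, (x j)^2 from rfl]
    rw [ball_moment_sq j hr, card_lt d D hdD.le, volume_ballSet hr.le]
  have hballB : ∀ j : {i : Fin D // ¬ (i:ℕ) < d},
      ∫ x in ballSet {i : Fin D // ¬ (i:ℕ) < d} w, (x j)^2
        = w^2/(((D-d : ℕ):ℝ)+2) * (volume (ballSet {i : Fin D // ¬ (i:ℕ) < d} w)).toReal := by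
    intro j
    have := setIntegral_meq (κ := {i : Fin D // ¬ (i:ℕ) < d}) (fun x => (x j)^2) (ballSet _ w)
    rw [meq_preimage_ballSet hw.le] at this
    rw [← this]
    rw [show (∫ x in closedBall (0 : EuclideanSpace ℝ {i : Fin D // ¬ (i:ℕ) < d}) w,
        ((EuclideanSpace.measurableEquiv _) x j)^2)
      = ∫ x in closedBall (0 : EuclideanSpace ℝ {i : Fin D // ¬ (i:ℕ) < d}) w, (x j)^2 from rfl]
    rw [ball_moment_sq j hw, card_not_lt d D hdD.le, volume_ballSet hw.le]
  rw [cyl_volume_eq d D r w, ENNReal.toReal_mul]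
  by_cases hi : (i:ℕ) < d
  · have h := cyl_integral_prod d D r w (fun x => (x ⟨i, hi⟩)^2) (fun _ => (1:ℝ))
    simp only [mul_one] at h
    rw [if_pos hi]
    rw [show (∫ y in cylinder d D r w, (y i)^2)
        = ∫ y in cylinder d D r w, ((fun j : {i : Fin D // (i:ℕ) < d} => y j.1) ⟨i, hi⟩)^2
        from rfl, h, hballA ⟨i, hi⟩, setIntegral_const, smul_eq_mul, mul_one]
    simp only [measureReal_def]
    ring
  · have h := cyl_integral_prod d D r w (fun _ => (1:ℝ)) (fun x => (x ⟨i, hi⟩)^2)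
    simp only [one_mul] at h
    rw [if_neg hi]
    rw [show (∫ y in cylinder d D r w, (y i)^2)
        = ∫ y in cylinder d D r w, ((fun j : {i : Fin D // ¬ (i:ℕ) < d} => y j.1) ⟨i, hi⟩)^2
        from rfl, h, hballB ⟨i, hi⟩, setIntegral_const, smul_eq_mul, mul_one]
    simp only [measureReal_def]
    ring

lemma cyl_moment_one (d D : ℕ) {r w : ℝ} (hr : 0 < r) (hw : 0 < w) (i : Fin D) :
    ∫ y in cylinder d D r w, y i = 0 := by
  by_cases hi : (i:ℕ) < d
  · have h := cyl_integral_prod d D r w (fun x => x ⟨i, hi⟩) (fun _ => (1:ℝ))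
    simp only [mul_one] at h
    rw [show (∫ y in cylinder d D r w, y i)
        = ∫ y in cylinder d D r w, (fun j : {i : Fin D // (i:ℕ) < d} => y j.1) ⟨i, hi⟩
        from rfl, h]
    have := setIntegral_meq (κ := {i : Fin D // (i:ℕ) < d}) (fun x => x ⟨i, hi⟩) (ballSet _ r)
    rw [meq_preimage_ballSet hr.le] at this
    rw [← this, show (∫ x in closedBall (0 : EuclideanSpace ℝ {i : Fin D // (i:ℕ) < d}) r,
        (EuclideanSpace.measurableEquiv _) x ⟨i, hi⟩)
      = ∫ x in closedBall (0 : EuclideanSpace ℝ {i : Fin D // (i:ℕ) < d}) r, x ⟨i, hi⟩ from rfl,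
      ball_moment_one (ι := {i : Fin D // (i:ℕ) < d}) r ⟨i, hi⟩, zero_mul]
  · have h := cyl_integral_prod d D r w (fun _ => (1:ℝ)) (fun x => x ⟨i, hi⟩)
    simp only [one_mul] at h
    rw [show (∫ y in cylinder d D r w, y i)
        = ∫ y in cylinder d D r w, (fun j : {i : Fin D // ¬ (i:ℕ) < d} => y j.1) ⟨i, hi⟩
        from rfl, h]
    have := setIntegral_meq (κ := {i : Fin D // ¬ (i:ℕ) < d}) (fun x => x ⟨i, hi⟩) (ballSet _ w)
    rw [meq_preimage_ballSet hw.le] at this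
    rw [← this, show (∫ x in closedBall (0 : EuclideanSpace ℝ {i : Fin D // ¬ (i:ℕ) < d}) w,
        (EuclideanSpace.measurableEquiv _) x ⟨i, hi⟩)
      = ∫ x in closedBall (0 : EuclideanSpace ℝ {i : Fin D // ¬ (i:ℕ) < d}) w, x ⟨i, hi⟩ from rfl,
      ball_moment_one (ι := {i : Fin D // ¬ (i:ℕ) < d}) w ⟨i, hi⟩, mul_zero]

lemma cyl_moment_cross (d D : ℕ) {r w : ℝ} (hr : 0 < r) (hw : 0 < w) {i j : Fin D} (hij : i ≠ j) :
    ∫ y in cylinder d D r w, y i * y j = 0 := by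
  have key : ∀ i j : Fin D, i ≠ j → (i:ℕ) < d → (∫ y in cylinder d D r w, y i * y j = 0) := by
    intro i j hij hi
    by_cases hj : (j:ℕ) < d
    · have h := cyl_integral_prod d D r w (fun x => x ⟨i, hi⟩ * x ⟨j, hj⟩) (fun _ => (1:ℝ))
      simp only [mul_one] at h
      rw [show (∫ y in cylinder d D r w, y i * y j)
          = ∫ y in cylinder d D r w,
            ((fun k : {i : Fin D // (i:ℕ) < d} => y k.1) ⟨i, hi⟩
              * (fun k : {i : Fin D // (i:ℕ) < d} => y k.1) ⟨j, hj⟩) from rfl, h]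
      have hne : (⟨i, hi⟩ : {i : Fin D // (i:ℕ) < d}) ≠ ⟨j, hj⟩ :=
        fun hc => hij (congrArg Subtype.val hc)
      have := setIntegral_meq (κ := {i : Fin D // (i:ℕ) < d})
        (fun x => x ⟨i, hi⟩ * x ⟨j, hj⟩) (ballSet _ r)
      rw [meq_preimage_ballSet hr.le] at this
      rw [← this, show (∫ x in closedBall (0 : EuclideanSpace ℝ {i : Fin D // (i:ℕ) < d}) r,
          (EuclideanSpace.measurableEquiv _) x ⟨i, hi⟩ * (EuclideanSpace.measurableEquiv _) x ⟨j, hj⟩)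
        = ∫ x in closedBall (0 : EuclideanSpace ℝ {i : Fin D // (i:ℕ) < d}) r,
            x ⟨i, hi⟩ * x ⟨j, hj⟩ from rfl,
        ball_moment_cross r hne, zero_mul]
    · have h := cyl_integral_prod d D r w (fun x => x ⟨i, hi⟩) (fun x => x ⟨j, hj⟩)
      rw [show (∫ y in cylinder d D r w, y i * y j)
          = ∫ y in cylinder d D r w,
            ((fun k : {i : Fin D // (i:ℕ) < d} => y k.1) ⟨i, hi⟩
              * (fun k : {i : Fin D // ¬ (i:ℕ) < d} => y k.1) ⟨j, hj⟩) from rfl, h]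
      have h1 := setIntegral_meq (κ := {i : Fin D // (i:ℕ) < d}) (fun x => x ⟨i, hi⟩) (ballSet _ r)
      rw [meq_preimage_ballSet hr.le] at h1
      rw [← h1, show (∫ x in closedBall (0 : EuclideanSpace ℝ {i : Fin D // (i:ℕ) < d}) r,
          (EuclideanSpace.measurableEquiv _) x ⟨i, hi⟩)
        = ∫ x in closedBall (0 : EuclideanSpace ℝ {i : Fin D // (i:ℕ) < d}) r, x ⟨i, hi⟩ from rfl,
        ball_moment_one (ι := {i : Fin D // (i:ℕ) < d}) r ⟨i, hi⟩, zero_mul]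
  by_cases hi : (i:ℕ) < d
  · exact key i j hij hi
  · by_cases hj : (j:ℕ) < d
    · rw [show (∫ y in cylinder d D r w, y i * y j)
          = ∫ y in cylinder d D r w, y j * y i from by congr 1; funext y; ring]
      exact key j i hij.symm hj
    · -- both not < d
      have h := cyl_integral_prod d D r w (fun _ => (1:ℝ)) (fun x => x ⟨i, hi⟩ * x ⟨j, hj⟩)
      simp only [one_mul] at h
      rw [show (∫ y in cylinder d D r w, y i * y j)
          = ∫ y in cylinder d D r w,
            ((fun k : {i : Fin D // ¬ (i:ℕ) < d} => y k.1) ⟨i, hi⟩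
              * (fun k : {i : Fin D // ¬ (i:ℕ) < d} => y k.1) ⟨j, hj⟩) from rfl, h]
      have hne : (⟨i, hi⟩ : {i : Fin D // ¬ (i:ℕ) < d}) ≠ ⟨j, hj⟩ :=
        fun hc => hij (congrArg Subtype.val hc)
      have := setIntegral_meq (κ := {i : Fin D // ¬ (i:ℕ) < d})
        (fun x => x ⟨i, hi⟩ * x ⟨j, hj⟩) (ballSet _ w)
      rw [meq_preimage_ballSet hw.le] at this
      rw [← this, show (∫ x in closedBall (0 : EuclideanSpace ℝ {i : Fin D // ¬ (i:ℕ) < d}) w,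
          (EuclideanSpace.measurableEquiv _) x ⟨i, hi⟩ * (EuclideanSpace.measurableEquiv _) x ⟨j, hj⟩)
        = ∫ x in closedBall (0 : EuclideanSpace ℝ {i : Fin D // ¬ (i:ℕ) < d}) w,
            x ⟨i, hi⟩ * x ⟨j, hj⟩ from rfl,
        ball_moment_cross w hne, mul_zero]

/-! ### The axis subspace -/

def axisSubmodule (d D : ℕ) : Submodule ℝ (EuclideanSpace ℝ (Fin D)) where
  carrier := {y | ∀ i : Fin D, d ≤ (i:ℕ) → y i = 0}
  add_mem' := by
    intro x y hx hy i hi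
    show x i + y i = 0
    rw [hx i hi, hy i hi, add_zero]
  zero_mem' := fun i hi => rfl
  smul_mem' := by
    intro c x hx i hi
    show c * x i = 0
    rw [hx i hi, mul_zero]

lemma mem_axisSubmodule (d D : ℕ) (y : EuclideanSpace ℝ (Fin D)) :
    y ∈ axisSubmodule d D ↔ ∀ i : Fin D, d ≤ (i:ℕ) → y i = 0 := Iff.rfl

def axisMap (d D : ℕ) : EuclideanSpace ℝ (Fin d) →ₗ[ℝ] EuclideanSpace ℝ (Fin D) where
  toFun x := WithLp.toLp 2 fun (i : Fin D) => if h : (i:ℕ) < d then x ⟨(i:ℕ), h⟩ else 0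
  map_add' x y := by
    ext i
    show _ = (_ + _ : EuclideanSpace ℝ (Fin D)) i
    rw [PiLp.add_apply]
    by_cases h : (i:ℕ) < d
    · simp only [dif_pos h]
      rw [PiLp.add_apply]
    · simp only [dif_neg h, add_zero]
  map_smul' c x := by
    ext i
    show _ = (c • _ : EuclideanSpace ℝ (Fin D)) i
    rw [PiLp.smul_apply]
    by_cases h : (i:ℕ) < d
    · simp only [dif_pos h]
      rw [PiLp.smul_apply]
    · simp only [dif_neg h, smul_zero]

lemma axisMap_injective (d D : ℕ) (hdD : d ≤ D) : Function.Injective (axisMap d D) := by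
  intro x y hxy
  ext j
  have h := congrArg (· ⟨(j:ℕ), lt_of_lt_of_le j.2 hdD⟩) hxy
  simp only [axisMap, LinearMap.coe_mk, AddHom.coe_mk] at h
  rw [dif_pos (show ((⟨(j:ℕ), lt_of_lt_of_le j.2 hdD⟩ : Fin D) : ℕ) < d from j.2),
    dif_pos (show ((⟨(j:ℕ), lt_of_lt_of_le j.2 hdD⟩ : Fin D) : ℕ) < d from j.2)] at h
  have hj : (⟨((⟨(j:ℕ), lt_of_lt_of_le j.2 hdD⟩ : Fin D) : ℕ), j.2⟩ : Fin d) = j := Fin.ext rfl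
  rwa [hj] at h

lemma axisMap_range (d D : ℕ) (hdD : d ≤ D) :
    LinearMap.range (axisMap d D) = axisSubmodule d D := by
  ext y
  constructor
  · rintro ⟨x, rfl⟩ i hi
    show (if h : (i:ℕ) < d then x ⟨(i:ℕ), h⟩ else 0) = 0
    rw [dif_neg (not_lt.2 hi)]
  · intro hy
    refine ⟨WithLp.toLp 2 fun (j : Fin d) => y ⟨(j:ℕ), lt_of_lt_of_le j.2 hdD⟩, ?_⟩
    ext i
    show (if h : (i:ℕ) < d then y ⟨(i:ℕ), lt_of_lt_of_le h hdD⟩ else 0) = y i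
    by_cases h : (i:ℕ) < d
    · rw [dif_pos h]
    · rw [dif_neg h]
      exact (hy i (not_lt.1 h)).symm

lemma axis_finrank (d D : ℕ) (hdD : d ≤ D) : finrank ℝ (axisSubmodule d D) = d := by
  rw [← axisMap_range d D hdD, LinearMap.finrank_range_of_inj (axisMap_injective d D hdD),
    finrank_euclideanSpace, Fintype.card_fin]

lemma axis_infDist_sq (d D : ℕ) (y : EuclideanSpace ℝ (Fin D)) :
    infDist y ((axisSubmodule d D : Submodule ℝ (EuclideanSpace ℝ (Fin D))) :
        Set (EuclideanSpace ℝ (Fin D))) ^ 2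
      = ∑ i ∈ Finset.univ.filter (fun i : Fin D => d ≤ (i:ℕ)), (y i)^2 := by
  set S : ℝ := ∑ i ∈ Finset.univ.filter (fun i : Fin D => d ≤ (i:ℕ)), (y i)^2 with hS
  have hS0 : 0 ≤ S := Finset.sum_nonneg (fun i _ => sq_nonneg _)
  set z : EuclideanSpace ℝ (Fin D) := WithLp.toLp 2 fun (i : Fin D) => if (i:ℕ) < d then y i else 0 with hz
  have hzmem : z ∈ axisSubmodule d D := by
    intro i hi
    show (if (i:ℕ) < d then y i else 0) = 0
    rw [if_neg (not_lt.2 hi)]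
  have hdistz : dist y z = Real.sqrt S := by
    rw [dist_eq_norm, EuclideanSpace.norm_eq]
    congr 1
    rw [hS, Finset.sum_filter]
    refine Finset.sum_congr rfl (fun i _ => ?_)
    have hyz : (y - z) i = y i - (if (i:ℕ) < d then y i else 0) := by
      rw [PiLp.sub_apply]
    by_cases h : (i:ℕ) < d
    · rw [hyz, if_pos h, if_neg (by omega), sub_self, norm_zero]
      simp
    · rw [hyz, if_neg h, if_pos (by omega), sub_zero, Real.norm_eq_abs, sq_abs]
  have hlow : ∀ u ∈ ((axisSubmodule d D : Submodule ℝ (EuclideanSpace ℝ (Fin D))) :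
      Set (EuclideanSpace ℝ (Fin D))), Real.sqrt S ≤ dist y u := by
    intro u hu
    rw [dist_eq_norm, EuclideanSpace.norm_eq]
    apply Real.sqrt_le_sqrt
    have h1 : S = ∑ i ∈ Finset.univ.filter (fun i : Fin D => d ≤ (i:ℕ)), ‖(y - u) i‖^2 := by
      refine Finset.sum_congr rfl (fun i hi => ?_)
      have hu0 : u i = 0 := hu i (Finset.mem_filter.1 hi).2
      rw [PiLp.sub_apply, hu0, sub_zero, Real.norm_eq_abs, sq_abs]
    rw [h1]
    exact Finset.sum_le_sum_of_subset_of_nonneg (Finset.filter_subset _ _)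
      (fun i _ _ => sq_nonneg _)
  have hne : ((axisSubmodule d D : Submodule ℝ (EuclideanSpace ℝ (Fin D))) :
      Set (EuclideanSpace ℝ (Fin D))).Nonempty := ⟨z, hzmem⟩
  have heq : infDist y ((axisSubmodule d D : Submodule ℝ (EuclideanSpace ℝ (Fin D))) :
      Set (EuclideanSpace ℝ (Fin D))) = Real.sqrt S := by
    refine le_antisymm (le_trans (infDist_le_dist_of_mem hzmem) hdistz.le) ?_
    by_contra hcon
    push_neg at hcon
    obtain ⟨u, hu, hdu⟩ := (infDist_lt_iff hne).1 hcon
    exact absurd hdu (not_lt.2 (hlow u hu))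
  rw [heq, Real.sq_sqrt hS0]

lemma card_filter_ge (d D : ℕ) (hdD : d ≤ D) :
    (Finset.univ.filter (fun i : Fin D => d ≤ (i:ℕ))).card = D - d := by
  rw [filter_not_lt, ← Fintype.card_subtype, card_not_lt d D hdD]

lemma axis_integral (d D : ℕ) (hd : 0 < d) (hdD : d < D) {r w : ℝ} (hr : 0 < r) (hw : 0 < w) :
    ∫ y in cylinder d D r w,
        infDist y ((axisSubmodule d D : Submodule ℝ (EuclideanSpace ℝ (Fin D))) :
          Set (EuclideanSpace ℝ (Fin D))) ^ 2
      = (((D - d : ℕ) : ℝ) / (((D - d : ℕ) : ℝ) + 2)) * w ^ 2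
          * (volume (cylinder d D r w)).toReal := by
  rw [setIntegral_congr_fun (cylinder_measurableSet d D r w)
    (fun y _ => axis_infDist_sq d D y)]
  rw [integral_finset_sum _ (fun i _ =>
    cylinder_integrableOn d D r w (g := fun y => (y i)^2) ((continuous_coord i).pow 2))]
  have hterm : ∀ i ∈ Finset.univ.filter (fun i : Fin D => d ≤ (i:ℕ)),
      (∫ y in cylinder d D r w, (y i)^2)
        = w^2/(((D-d : ℕ):ℝ)+2) * (volume (cylinder d D r w)).toReal := by
    intro i hi
    rw [cyl_moment_sq d D hd hdD hr hw i,
      if_neg (not_lt.2 (Finset.mem_filter.1 hi).2)]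
  rw [Finset.sum_congr rfl hterm, Finset.sum_const, card_filter_ge d D hdD.le, nsmul_eq_mul]
  ring

/-! ### Second moment bound for linear functionals -/

lemma inner_eq_sum (D : ℕ) (x y : EuclideanSpace ℝ (Fin D)) :
    (inner ℝ x y : ℝ) = ∑ i, x i * y i := by
  simp [PiLp.inner_apply, RCLike.inner_apply, conj_trivial, mul_comm]

lemma cyl_inner_sq_ge (d D : ℕ) (hd : 0 < d) (hdD : d < D) {r w : ℝ} (hr : 0 < r) (hw : 0 < w)
    (hbal : w ^ 2 / ((D - d : ℕ) + 2 : ℝ) ≤ r ^ 2 / ((d : ℝ) + 2))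
    (v p : EuclideanSpace ℝ (Fin D)) :
    w^2/(((D-d:ℕ):ℝ)+2) * (volume (cylinder d D r w)).toReal * ‖v‖^2
      ≤ ∫ y in cylinder d D r w, (inner ℝ v (y - p) : ℝ)^2 := by
  have hC := cylinder_measurableSet d D r w
  have hCfin : volume (cylinder d D r w) < ⊤ := (cylinder_isCompact d D r w).measure_lt_top
  set c : ℝ := (inner ℝ v p : ℝ) with hc
  set volC : ℝ := (volume (cylinder d D r w)).toReal with hvolC
  have hvol0 : 0 ≤ volC := ENNReal.toReal_nonneg
  have hcont_inner : Continuous fun y : EuclideanSpace ℝ (Fin D) => (inner ℝ v y : ℝ) :=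
    Continuous.inner continuous_const continuous_id
  -- expansion
  have hstep : ∀ y : EuclideanSpace ℝ (Fin D), (inner ℝ v (y - p) : ℝ)^2
      = ((inner ℝ v y : ℝ)^2 - (2*c) * (inner ℝ v y : ℝ)) + c^2 := by
    intro y
    rw [inner_sub_right]
    ring
  have hf : IntegrableOn (fun y : EuclideanSpace ℝ (Fin D) => (inner ℝ v y : ℝ)^2)
      (cylinder d D r w) := cylinder_integrableOn d D r w (hcont_inner.pow 2)
  have hg : IntegrableOn (fun y : EuclideanSpace ℝ (Fin D) => (2*c) * (inner ℝ v y : ℝ))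
      (cylinder d D r w) := cylinder_integrableOn d D r w (continuous_const.mul hcont_inner)
  have hsplit : ∫ y in cylinder d D r w, (inner ℝ v (y - p) : ℝ)^2
      = ((∫ y in cylinder d D r w, (inner ℝ v y : ℝ)^2)
          - (2*c) * ∫ y in cylinder d D r w, (inner ℝ v y : ℝ)) + c^2 * volC := by
    rw [setIntegral_congr_fun hC (fun y _ => hstep y)]
    have h1 : ∫ y in cylinder d D r w,
          (((inner ℝ v y : ℝ)^2 - (2*c) * (inner ℝ v y : ℝ)) + c^2)
        = (∫ y in cylinder d D r w, ((inner ℝ v y : ℝ)^2 - (2*c) * (inner ℝ v y : ℝ)))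
          + ∫ _y in cylinder d D r w, (c^2 : ℝ) :=
      integral_add (hf.sub hg) (integrableOn_const hCfin.ne)
    have h2 : ∫ y in cylinder d D r w, ((inner ℝ v y : ℝ)^2 - (2*c) * (inner ℝ v y : ℝ))
        = (∫ y in cylinder d D r w, (inner ℝ v y : ℝ)^2)
          - ∫ y in cylinder d D r w, (2*c) * (inner ℝ v y : ℝ) := integral_sub hf hg
    rw [h1, h2, MeasureTheory.integral_const_mul, setIntegral_const, smul_eq_mul, measureReal_def, ← hvolC]
    ring
  -- first moment vanishes
  have hJ : ∫ y in cylinder d D r w, (inner ℝ v y : ℝ) = 0 := by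
    rw [setIntegral_congr_fun hC (fun y _ => inner_eq_sum D v y),
      integral_finset_sum _ (fun i _ =>
        cylinder_integrableOn d D r w (g := fun y => v i * y i) (continuous_const.mul (continuous_coord i)))]
    refine Finset.sum_eq_zero (fun i _ => ?_)
    rw [MeasureTheory.integral_const_mul, cyl_moment_one d D hr hw i, mul_zero]
  -- second moment bound
  have hnormv : ‖v‖^2 = ∑ i, v i * v i := by
    rw [EuclideanSpace.norm_eq, Real.sq_sqrt (by positivity)]
    exact Finset.sum_congr rfl (fun i _ => by rw [Real.norm_eq_abs, sq_abs, sq])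
  have hI : w^2/(((D-d:ℕ):ℝ)+2) * volC * ‖v‖^2
      ≤ ∫ y in cylinder d D r w, (inner ℝ v y : ℝ)^2 := by
    have hexp : ∀ y : EuclideanSpace ℝ (Fin D),
        (inner ℝ v y : ℝ)^2 = ∑ i, ∑ k, (v i * v k) * (y i * y k) := by
      intro y
      rw [inner_eq_sum D v y, sq, Finset.sum_mul_sum]
      exact Finset.sum_congr rfl (fun i _ => Finset.sum_congr rfl (fun k _ => by ring))
    rw [setIntegral_congr_fun hC (fun y _ => hexp y),
      integral_finset_sum _ (fun i _ => ?_)]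
    swap
    · apply cylinder_integrableOn d D r w
      apply continuous_finset_sum
      exact fun k _ => continuous_const.mul ((continuous_coord i).mul (continuous_coord k))
    have hrowval : ∀ i : Fin D,
        (∫ y in cylinder d D r w, ∑ k, (v i * v k) * (y i * y k))
          = (v i * v i) * ((if (i:ℕ) < d then r^2/((d:ℝ)+2) else w^2/(((D-d:ℕ):ℝ)+2)) * volC) := by
      intro i
      rw [integral_finset_sum _ (fun k _ =>
        cylinder_integrableOn d D r w (g := fun y => (v i * v k) * (y i * y k))
          (continuous_const.mul ((continuous_coord i).mul (continuous_coord k))))]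
      rw [Finset.sum_eq_single i]
      · rw [MeasureTheory.integral_const_mul,
          show (∫ y in cylinder d D r w, y i * y i) = ∫ y in cylinder d D r w, (y i)^2 from
            setIntegral_congr_fun hC (fun y _ => (sq (y i)).symm),
          cyl_moment_sq d D hd hdD hr hw i]
      · intro k _ hk
        rw [MeasureTheory.integral_const_mul, cyl_moment_cross d D hr hw (Ne.symm hk), mul_zero]
      · intro h
        exact absurd (Finset.mem_univ i) h
    rw [Finset.sum_congr rfl (fun i _ => hrowval i)]
    have hterm : ∀ i : Fin D,
        (v i * v i) * (w^2/(((D-d:ℕ):ℝ)+2) * volC)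
          ≤ (v i * v i) * ((if (i:ℕ) < d then r^2/((d:ℝ)+2) else w^2/(((D-d:ℕ):ℝ)+2)) * volC) := by
      intro i
      apply mul_le_mul_of_nonneg_left _ (mul_self_nonneg (v i))
      apply mul_le_mul_of_nonneg_right _ hvol0
      by_cases hi : (i:ℕ) < d
      · rw [if_pos hi]
        calc w^2/(((D-d:ℕ):ℝ)+2) = w ^ 2 / ((D - d : ℕ) + 2 : ℝ) := by norm_cast
          _ ≤ r ^ 2 / ((d : ℝ) + 2) := hbal
      · rw [if_neg hi]
    calc w^2/(((D-d:ℕ):ℝ)+2) * volC * ‖v‖^2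
        = ∑ i, (v i * v i) * (w^2/(((D-d:ℕ):ℝ)+2) * volC) := by
          rw [hnormv, Finset.mul_sum]
          exact Finset.sum_congr rfl (fun i _ => by ring)
      _ ≤ _ := Finset.sum_le_sum (fun i _ => hterm i)
  rw [hsplit, hJ, mul_zero, sub_zero]
  nlinarith [sq_nonneg c]

/-! ### Lower bound for an arbitrary d-flat -/

set_option maxHeartbeats 2000000 in
lemma flat_lower_bound (d D : ℕ) (hd : 0 < d) (hdD : d < D) {r w : ℝ} (hr : 0 < r) (hw : 0 < w)
    (hbal : w ^ 2 / ((D - d : ℕ) + 2 : ℝ) ≤ r ^ 2 / ((d : ℝ) + 2))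
    (L : AffineSubspace ℝ (EuclideanSpace ℝ (Fin D)))
    (hrank : finrank ℝ L.direction = d)
    (hne : (L : Set (EuclideanSpace ℝ (Fin D))).Nonempty) :
    (((D - d : ℕ) : ℝ) / (((D - d : ℕ) : ℝ) + 2)) * w ^ 2 * (volume (cylinder d D r w)).toReal
      ≤ ∫ y in cylinder d D r w, infDist y (L : Set (EuclideanSpace ℝ (Fin D))) ^ 2 := by
  classical
  obtain ⟨p, hp⟩ := hne
  set W : Submodule ℝ (EuclideanSpace ℝ (Fin D)) := L.directionᗮ with hWdef
  have hDrank : finrank ℝ W = D - d := by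
    have h := Submodule.finrank_add_finrank_orthogonal (K := L.direction)
    rw [hrank, finrank_euclideanSpace, Fintype.card_fin, ← hWdef] at h
    omega
  set m := finrank ℝ W with hm
  set b := stdOrthonormalBasis ℝ W with hb
  have hC := cylinder_measurableSet d D r w
  set volC : ℝ := (volume (cylinder d D r w)).toReal with hvolC
  -- pointwise inequality
  have hpt : ∀ y : EuclideanSpace ℝ (Fin D),
      (∑ j : Fin m, (inner ℝ ((b j : EuclideanSpace ℝ (Fin D))) (y - p) : ℝ)^2)
        ≤ infDist y (L : Set (EuclideanSpace ℝ (Fin D))) ^ 2 := by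
    intro y
    have hproj : ‖(W.orthogonalProjectionOnto (y - p) : W)‖
        ≤ infDist y (L : Set (EuclideanSpace ℝ (Fin D))) := by
      rw [← not_lt]
      intro hcon
      obtain ⟨z, hz, hdz⟩ := (infDist_lt_iff ⟨p, hp⟩).1 hcon
      have hzp : p - z ∈ L.direction := by
        have h := AffineSubspace.vsub_mem_direction hp hz
        simpa [vsub_eq_sub] using h
      have h0 : W.orthogonalProjectionOnto (p - z) = 0 :=
        Submodule.orthogonalProjectionOnto_apply_of_mem_orthogonal
          (Submodule.le_orthogonal_orthogonal L.direction hzp)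
      have hPz : W.orthogonalProjectionOnto (y - z) = W.orthogonalProjectionOnto (y - p) := by
        have hd2 : y - z = (y - p) + (p - z) := by abel
        rw [hd2, map_add, h0, add_zero]
      have hle : ‖(W.orthogonalProjectionOnto (y - z) : W)‖ ≤ ‖y - z‖ := by
        have h2 := Submodule.norm_sq_eq_add_norm_sq_projection (y - z) W
        have h3 := norm_nonneg ((W.orthogonalProjectionOnto (y - z) : W))
        have h4 := norm_nonneg (y - z)
        have h5 := sq_nonneg ‖(Wᗮ.orthogonalProjectionOnto (y - z) : Wᗮ)‖
        nlinarith [h2, h3, h4, h5]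
      rw [hPz] at hle
      rw [dist_eq_norm] at hdz
      exact absurd hdz (not_lt.2 hle)
    have hsq : ‖(W.orthogonalProjectionOnto (y - p) : W)‖^2
        ≤ infDist y (L : Set (EuclideanSpace ℝ (Fin D))) ^ 2 :=
      pow_le_pow_left₀ (norm_nonneg _) hproj 2
    refine le_trans (le_of_eq ?_) hsq
    have hrepr : ∀ j : Fin m, (inner ℝ ((b j : EuclideanSpace ℝ (Fin D))) (y - p) : ℝ)
        = b.repr (W.orthogonalProjectionOnto (y - p)) j := by
      intro j
      rw [b.repr_apply_apply]
      exact ((Submodule.inner_orthogonalProjectionOnto_eq_of_mem_left (K := W) (b j) (y - p)).symm)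
    calc ∑ j : Fin m, (inner ℝ ((b j : EuclideanSpace ℝ (Fin D))) (y - p) : ℝ)^2
        = ∑ j : Fin m, ‖b.repr (W.orthogonalProjectionOnto (y - p)) j‖^2 := by
          refine Finset.sum_congr rfl (fun j _ => ?_)
          rw [hrepr j, Real.norm_eq_abs, sq_abs]
      _ = ‖b.repr (W.orthogonalProjectionOnto (y - p))‖^2 := by
          rw [EuclideanSpace.norm_eq, Real.sq_sqrt (by positivity)]
      _ = ‖(W.orthogonalProjectionOnto (y - p) : W)‖^2 := by
          rw [(b.repr).norm_map (W.orthogonalProjectionOnto (y - p))]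
  -- integrate the pointwise bound
  have hcontj : ∀ j : Fin m, Continuous
      (fun y : EuclideanSpace ℝ (Fin D) =>
        (inner ℝ ((b j : EuclideanSpace ℝ (Fin D))) (y - p) : ℝ)^2) := by
    intro j
    exact (Continuous.inner continuous_const (continuous_sub_right p)).pow 2
  have hIneq : ∫ y in cylinder d D r w,
      (∑ j : Fin m, (inner ℝ ((b j : EuclideanSpace ℝ (Fin D))) (y - p) : ℝ)^2)
        ≤ ∫ y in cylinder d D r w,
            infDist y (L : Set (EuclideanSpace ℝ (Fin D))) ^ 2 := by
    refine setIntegral_mono_on ?_ ?_ hC (fun y _ => hpt y)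
    · apply cylinder_integrableOn
      apply continuous_finset_sum
      intro j _
      exact hcontj j
    · exact cylinder_integrableOn d D r w ((continuous_infDist_pt _).pow 2)
  have hswap := integral_finset_sum (μ := volume.restrict (cylinder d D r w)) Finset.univ
    (f := fun (j : Fin m) (y : EuclideanSpace ℝ (Fin D)) =>
      (inner ℝ ((b j : EuclideanSpace ℝ (Fin D))) (y - p) : ℝ)^2)
    (fun j _ => cylinder_integrableOn d D r w (hcontj j))
  rw [hswap] at hIneq
  refine le_trans ?_ hIneq
  have hterm : ∀ j : Fin m, w^2/(((D-d:ℕ):ℝ)+2) * volC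
      ≤ ∫ y in cylinder d D r w, (inner ℝ ((b j : EuclideanSpace ℝ (Fin D))) (y - p) : ℝ)^2 := by
    intro j
    have hv := cyl_inner_sq_ge d D hd hdD hr hw hbal ((b j : EuclideanSpace ℝ (Fin D))) p
    have hbj : ‖((b j : EuclideanSpace ℝ (Fin D)))‖ = 1 := by
      rw [Submodule.norm_coe]
      exact b.orthonormal.1 j
    rw [hbj, one_pow, mul_one, ← hvolC] at hv
    exact hv
  calc (((D - d : ℕ) : ℝ) / (((D - d : ℕ) : ℝ) + 2)) * w ^ 2 * volC
      = ∑ _j : Fin m, w^2/(((D-d:ℕ):ℝ)+2) * volC := by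
        rw [Finset.sum_const, Finset.card_univ, Fintype.card_fin, nsmul_eq_mul, hDrank]
        ring
    _ ≤ ∑ j : Fin m, ∫ y in cylinder d D r w,
          (inner ℝ ((b j : EuclideanSpace ℝ (Fin D))) (y - p) : ℝ)^2 :=
        Finset.sum_le_sum (fun j _ => hterm j)

end BestFit
end BestFitAux

/-- If `r²/(d+2) ≥ w²/(D−d+2)`, the infimum over all `d`-flats `L` of `∫_C dist(y,L)² dy`
over the cylinder `C` equals `((D−d)/(D−d+2)) · w² · vol(C)`; in particular the axis
`L₁ = ℝ^d × {0}` is a best-fit `d`-flat to `C` in the least-squares sense. -/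
theorem best_fit_flat_cylinder (d D : ℕ) (hd : 0 < d) (hdD : d < D) (r w : ℝ)
    (hr : 0 < r) (hw : 0 < w)
    (hbal : w ^ 2 / ((D - d : ℕ) + 2 : ℝ) ≤ r ^ 2 / ((d : ℝ) + 2)) :
    sInf { s : ℝ | ∃ L : AffineSubspace ℝ (EuclideanSpace ℝ (Fin D)),
        Module.finrank ℝ L.direction = d ∧
        (L : Set (EuclideanSpace ℝ (Fin D))).Nonempty ∧
        s = ∫ y in cylinder d D r w,
          infDist y (L : Set (EuclideanSpace ℝ (Fin D))) ^ 2 } =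
      (((D - d : ℕ) : ℝ) / (((D - d : ℕ) : ℝ) + 2)) * w ^ 2 *
        (volume (cylinder d D r w)).toReal ∧
    ∃ L₁ : AffineSubspace ℝ (EuclideanSpace ℝ (Fin D)),
      Module.finrank ℝ L₁.direction = d ∧
      (L₁ : Set (EuclideanSpace ℝ (Fin D))) = {y | ∀ i : Fin D, d ≤ (i : ℕ) → y i = 0} ∧
      ∫ y in cylinder d D r w, infDist y (L₁ : Set (EuclideanSpace ℝ (Fin D))) ^ 2 =
        (((D - d : ℕ) : ℝ) / (((D - d : ℕ) : ℝ) + 2)) * w ^ 2 *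
          (volume (cylinder d D r w)).toReal := by

  classical
  set S : Set ℝ := { s : ℝ | ∃ L : AffineSubspace ℝ (EuclideanSpace ℝ (Fin D)),
      Module.finrank ℝ L.direction = d ∧
      (L : Set (EuclideanSpace ℝ (Fin D))).Nonempty ∧
      s = ∫ y in cylinder d D r w,
        Metric.infDist y (L : Set (EuclideanSpace ℝ (Fin D))) ^ 2 } with hS
  set T : ℝ := (((D - d : ℕ) : ℝ) / (((D - d : ℕ) : ℝ) + 2)) * w ^ 2 *
      (MeasureTheory.volume (cylinder d D r w)).toReal with hT
  set L₁ : AffineSubspace ℝ (EuclideanSpace ℝ (Fin D)) :=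
    (BestFit.axisSubmodule d D).toAffineSubspace with hL₁
  have hL₁dir : L₁.direction = BestFit.axisSubmodule d D :=
    Submodule.toAffineSubspace_direction _
  have hrank₁ : Module.finrank ℝ L₁.direction = d := by
    rw [hL₁dir]
    exact BestFit.axis_finrank d D hdD.le
  have hL₁coe : (L₁ : Set (EuclideanSpace ℝ (Fin D)))
      = ((BestFit.axisSubmodule d D : Submodule ℝ (EuclideanSpace ℝ (Fin D))) :
          Set (EuclideanSpace ℝ (Fin D))) := rfl
  have hne₁ : (L₁ : Set (EuclideanSpace ℝ (Fin D))).Nonempty :=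
    ⟨0, by rw [hL₁coe]; exact Submodule.zero_mem _⟩
  have hint₁ : ∫ y in cylinder d D r w,
      Metric.infDist y (L₁ : Set (EuclideanSpace ℝ (Fin D))) ^ 2 = T := by
    rw [hL₁coe, hT]
    exact BestFit.axis_integral d D hd hdD hr hw
  have hmemS : T ∈ S := ⟨L₁, hrank₁, hne₁, hint₁.symm⟩
  have hlb : ∀ s ∈ S, T ≤ s := by
    rintro s ⟨L, hrank, hne, rfl⟩
    exact BestFit.flat_lower_bound d D hd hdD hr hw hbal L hrank hne
  refine ⟨le_antisymm (csInf_le ⟨T, hlb⟩ hmemS) (le_csInf ⟨T, hmemS⟩ hlb), L₁, hrank₁, rfl, hint₁⟩
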